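/- Let p ≥ 2 and equip the finite-dimensional real vector space of symmetric p×p real matrices with an additive Haar measure. Then the set of symmetric p×p real matrices having a repeated eigenvalue (i.e. matrices A such that the p real eigenvalues of A, counted with multiplicity, are not pairwise distinct) has measure zero. -/

import Mathlib

open Matrix MeasureTheory

/-- The subspace of symmetric `p × p` real matrices. -/
def symmetricMatrices (p : ℕ) : Submodule ℝ (Matrix (Fin p) (Fin p) ℝ) where
  carrier := {A | A.IsSymm}
  add_mem' hA hB := hA.add hB
  zero_mem' := Matrix.isSymm_zero
  smul_mem' c _ hA := hA.smul c

theorem isHermitian_of_mem_symmetricMatrices {p : ℕ} (A : symmetricMatrices p) :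
    (A : Matrix (Fin p) (Fin p) ℝ).IsHermitian := by
  have h : (A : Matrix (Fin p) (Fin p) ℝ).IsSymm := A.2
  rwa [Matrix.IsHermitian, Matrix.conjTranspose_eq_transpose_of_trivial]

section Aux

open MvPolynomial

private lemma aux_poly_zero_locus (n : ℕ) (P : MvPolynomial (Fin n) ℝ) (hP : P ≠ 0) :
    (volume : Measure (Fin n → ℝ)) {x | MvPolynomial.eval x P = 0} = 0 := by
  induction n with
  | zero =>
    have h0 : P.coeff 0 ≠ 0 := by
      intro h
      apply hP
      rw [eq_C_of_isEmpty P, h, map_zero]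
    have : {x : Fin 0 → ℝ | MvPolynomial.eval x P = 0} = ∅ := by
      ext x
      simp only [Set.mem_setOf_eq, Set.mem_empty_iff_false, iff_false]
      rw [eq_C_of_isEmpty P]
      simpa using h0
    simp [this]
  | succ n ih =>
    set Q : Polynomial (MvPolynomial (Fin n) ℝ) := finSuccEquiv ℝ n P with hQdef
    have hQ0 : Q ≠ 0 := by
      intro h
      exact hP ((map_eq_zero_iff _ (finSuccEquiv ℝ n).injective).mp h)
    have hlead : Q.leadingCoeff ≠ 0 := Polynomial.leadingCoeff_ne_zero.mpr hQ0
    set T : Set ((Fin n → ℝ) × ℝ) :=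
      {q | MvPolynomial.eval (Fin.cons q.2 q.1) P = 0} with hTdef
    have hTcont : Continuous fun q : (Fin n → ℝ) × ℝ =>
        MvPolynomial.eval (Fin.cons q.2 q.1 : Fin (n+1) → ℝ) P := by
      apply (MvPolynomial.continuous_eval P).comp
      refine continuous_pi fun i => ?_
      refine Fin.cases ?_ ?_ i
      · simpa using continuous_snd
      · intro j
        simpa using (show Continuous fun a : (Fin n → ℝ) × ℝ => a.1 j from
          (continuous_apply j).comp continuous_fst)
    have hTmeas : MeasurableSet T := hTcont.measurable (measurableSet_singleton 0)
    have hTzero : ((volume : Measure (Fin n → ℝ)).prod (volume : Measure ℝ)) T = 0 := by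
      rw [Measure.measure_prod_null hTmeas]
      have hae : ∀ᵐ y ∂(volume : Measure (Fin n → ℝ)),
          MvPolynomial.eval y Q.leadingCoeff ≠ 0 := by
        have h := ih Q.leadingCoeff hlead
        refine (ae_iff.mpr ?_)
        simpa using h
      filter_upwards [hae] with y hy
      have hmap : (Q.map (MvPolynomial.eval y)) ≠ 0 := by
        intro h
        apply hy
        have h2 := congrArg (fun q => Polynomial.coeff q Q.natDegree) h
        simp only [Polynomial.coeff_map, Polynomial.coeff_zero] at h2
        rw [Polynomial.leadingCoeff]
        exact h2
      have hfin : {a : ℝ | Polynomial.IsRoot (Q.map (MvPolynomial.eval y)) a}.Finite :=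
        Polynomial.finite_setOf_isRoot hmap
      have : (Prod.mk y ⁻¹' T) = {a : ℝ | Polynomial.IsRoot (Q.map (MvPolynomial.eval y)) a} := by
        ext a
        simp only [Set.mem_preimage, hTdef, Set.mem_setOf_eq, Polynomial.IsRoot]
        rw [MvPolynomial.eval_eq_eval_mv_eval']
      simp only [Pi.zero_apply]  -- goal: (fun y => volume _) y = 0? filter_upwards gives pointwise
      rw [this]
      exact hfin.measure_zero _
    -- transfer back to the pi space
    have hmp := measurePreserving_piFinSuccAbove (fun _ : Fin (n+1) => (volume : Measure ℝ)) 0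
    set e := MeasurableEquiv.piFinSuccAbove (fun _ : Fin (n+1) => ℝ) 0 with hedef
    have hS : {x : Fin (n+1) → ℝ | MvPolynomial.eval x P = 0} = e ⁻¹' (Prod.swap ⁻¹' T) := by
      ext x
      simp only [Set.mem_setOf_eq, Set.mem_preimage, hedef, MeasurableEquiv.piFinSuccAbove,
        MeasurableEquiv.coe_mk, Equiv.coe_fn_mk, Prod.swap, hTdef]
      show _ ↔ MvPolynomial.eval (Fin.cons (x 0) (Fin.removeNth 0 x) : Fin (n+1) → ℝ) P = 0
      rw [Fin.removeNth_zero, Fin.cons_self_tail x]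
    have hvol : (volume : Measure (Fin (n+1) → ℝ)) {x | MvPolynomial.eval x P = 0}
        = ((volume : Measure ℝ).prod (volume : Measure (Fin n → ℝ))) (Prod.swap ⁻¹' T) := by
      rw [hS]
      have : MeasurableSet (Prod.swap ⁻¹' T) := measurable_swap hTmeas
      rw [volume_pi]
      exact hmp.measure_preimage this.nullMeasurableSet
    rw [hvol]
    have := Measure.prod_swap (μ := (volume : Measure ℝ)) (ν := (volume : Measure (Fin n → ℝ)))
    calc ((volume : Measure ℝ).prod volume) (Prod.swap ⁻¹' T)
        = (((volume : Measure ℝ).prod volume).map Prod.swap) T := by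
          rw [Measure.map_apply measurable_swap hTmeas]
      _ = (((volume : Measure (Fin n → ℝ))).prod volume) T := by rw [this]
      _ = 0 := hTzero

private lemma aux_trace_pow_eq_sum_pow {p : ℕ} {A : Matrix (Fin p) (Fin p) ℝ} (hA : A.IsHermitian)
    (m : ℕ) : Matrix.trace (A ^ m) = ∑ i, hA.eigenvalues i ^ m := by
  set U : Matrix (Fin p) (Fin p) ℝ :=
    (Matrix.IsHermitian.eigenvectorUnitary hA : Matrix (Fin p) (Fin p) ℝ) with hUdef
  have hU1 : star U * U = 1 :=
    (Matrix.mem_unitaryGroup_iff').mp (Matrix.IsHermitian.eigenvectorUnitary hA).2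
  have hU2 : U * star U = 1 :=
    (Matrix.mem_unitaryGroup_iff).mp (Matrix.IsHermitian.eigenvectorUnitary hA).2
  set D : Matrix (Fin p) (Fin p) ℝ :=
    Matrix.diagonal (RCLike.ofReal ∘ hA.eigenvalues) with hDdef
  have hpow : A ^ m = U * D ^ m * star U := by
    induction m with
    | zero => simpa using hU2.symm
    | succ m ihm =>
      rw [pow_succ, ihm]
      conv_lhs => rw [hA.spectral_theorem, Unitary.conjStarAlgAut_apply]
      rw [pow_succ]
      simp only [mul_assoc]
      rw [← mul_assoc (star U) U, hU1, one_mul]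
  rw [hpow, Matrix.trace_mul_cycle, hU1, one_mul, Matrix.diagonal_pow, Matrix.trace_diagonal]
  simp

private lemma aux_det_trace_pow {p : ℕ} {A : Matrix (Fin p) (Fin p) ℝ} (hA : A.IsHermitian) :
    Matrix.det (Matrix.of fun j k : Fin p => Matrix.trace (A ^ ((j : ℕ) + (k : ℕ)))) =
      (Matrix.det (Matrix.vandermonde hA.eigenvalues)) ^ 2 := by
  have key : (Matrix.of fun j k : Fin p => Matrix.trace (A ^ ((j : ℕ) + (k : ℕ)))) =
      (Matrix.vandermonde hA.eigenvalues)ᵀ * Matrix.vandermonde hA.eigenvalues := by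
    ext j k
    rw [Matrix.of_apply, aux_trace_pow_eq_sum_pow hA, Matrix.mul_apply]
    simp [Matrix.vandermonde_apply, pow_add]
  rw [key, Matrix.det_mul, Matrix.det_transpose, sq]

private lemma aux_det_trace_pow_diag {p : ℕ} :
    Matrix.det (Matrix.of fun j k : Fin p =>
      Matrix.trace ((Matrix.diagonal (fun i : Fin p => (i : ℝ))) ^ ((j : ℕ) + (k : ℕ)))) ≠ 0 := by
  set v : Fin p → ℝ := fun i => (i : ℝ) with hv
  have key : (Matrix.of fun j k : Fin p =>
      Matrix.trace ((Matrix.diagonal v) ^ ((j : ℕ) + (k : ℕ)))) =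
      (Matrix.vandermonde v)ᵀ * Matrix.vandermonde v := by
    ext j k
    rw [Matrix.of_apply, Matrix.diagonal_pow, Matrix.trace_diagonal, Matrix.mul_apply]
    simp [Matrix.vandermonde_apply, pow_add]
  rw [key, Matrix.det_mul, Matrix.det_transpose]
  have hvd : Matrix.det (Matrix.vandermonde v) ≠ 0 := by
    rw [Matrix.det_vandermonde]
    apply Finset.prod_ne_zero_iff.mpr
    intro i _
    apply Finset.prod_ne_zero_iff.mpr
    intro j hj
    have hij : i < j := Finset.mem_Ioi.mp hj
    have : (i : ℝ) < (j : ℝ) := by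
      exact_mod_cast Fin.lt_iff_val_lt_val.mp hij
    exact sub_ne_zero.mpr (ne_of_gt this)
  exact mul_ne_zero hvd hvd

end Aux

theorem repeated_eigenvalue_measure_zero (p : ℕ) (hp : 2 ≤ p)
    [MeasurableSpace (symmetricMatrices p)] [BorelSpace (symmetricMatrices p)]
    (μ : Measure (symmetricMatrices p)) [μ.IsAddHaarMeasure] :
    μ {A : symmetricMatrices p |
        ¬ Function.Injective (isHermitian_of_mem_symmetricMatrices A).eigenvalues} = 0 := by
  classical
  set n := Module.finrank ℝ (symmetricMatrices p) with hn
  set b : Module.Basis (Fin n) ℝ (symmetricMatrices p) := Module.finBasis ℝ (symmetricMatrices p)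
    with hb
  -- the matrix of polynomials giving the generic symmetric matrix
  set AP : Matrix (Fin p) (Fin p) (MvPolynomial (Fin n) ℝ) :=
    Matrix.of (fun a c => ∑ i, MvPolynomial.C (((b i : Matrix (Fin p) (Fin p) ℝ)) a c)
      * MvPolynomial.X i) with hAdef
  set P : MvPolynomial (Fin n) ℝ :=
    Matrix.det (Matrix.of fun j k : Fin p => Matrix.trace (AP ^ ((j : ℕ) + (k : ℕ)))) with hPdef
  have hmatrix : ∀ x : Fin n → ℝ,
      (MvPolynomial.eval x).mapMatrix AP =
        ((b.equivFun.symm x : symmetricMatrices p) : Matrix (Fin p) (Fin p) ℝ) := by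
    intro x
    ext a c
    have hrhs : ((b.equivFun.symm x : symmetricMatrices p) : Matrix (Fin p) (Fin p) ℝ)
        = ∑ i, x i • ((b i : Matrix (Fin p) (Fin p) ℝ)) := by
      rw [b.equivFun_symm_apply]
      push_cast [Submodule.coe_sum]
      rfl
    rw [hrhs]
    simp [RingHom.mapMatrix_apply, Matrix.map_apply, hAdef, Matrix.sum_apply, mul_comm]
  have hevalP : ∀ x : Fin n → ℝ, MvPolynomial.eval x P =
      Matrix.det (Matrix.of fun j k : Fin p =>
        Matrix.trace ((((b.equivFun.symm x : symmetricMatrices p) :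
          Matrix (Fin p) (Fin p) ℝ)) ^ ((j : ℕ) + (k : ℕ)))) := by
    intro x
    rw [hPdef, RingHom.map_det]
    congr 1
    ext j k
    simp only [RingHom.mapMatrix_apply, Matrix.map_apply, Matrix.of_apply]
    rw [AddMonoidHom.map_trace]
    congr 1
    have h1 : ((MvPolynomial.eval x : MvPolynomial (Fin n) ℝ →+* ℝ) :
        MvPolynomial (Fin n) ℝ →+ ℝ).mapMatrix (AP ^ ((j : ℕ) + (k : ℕ)))
        = (MvPolynomial.eval x).mapMatrix (AP ^ ((j : ℕ) + (k : ℕ))) := rfl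
    rw [← RingHom.mapMatrix_apply, map_pow, hmatrix]
  -- P is not the zero polynomial
  have hP0 : P ≠ 0 := by
    intro h
    set A₀ : symmetricMatrices p :=
      ⟨Matrix.diagonal (fun i : Fin p => (i : ℝ)), Matrix.isSymm_diagonal _⟩ with hA₀
    have := hevalP (b.equivFun A₀)
    rw [h, map_zero] at this
    rw [b.equivFun.symm_apply_apply] at this
    exact aux_det_trace_pow_diag this.symm
  -- measurability and measure computations
  have hmeas_t : MeasurableSet {x : Fin n → ℝ | MvPolynomial.eval x P = 0} :=
    (MvPolynomial.continuous_eval P).measurable (measurableSet_singleton 0)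
  have hconte : Continuous (⇑b.equivFun : symmetricMatrices p → (Fin n → ℝ)) :=
    b.equivFun.toLinearMap.continuous_of_finiteDimensional
  set ν : Measure (Fin n → ℝ) := μ.map b.equivFun with hν
  haveI : ν.IsAddHaarMeasure := by
    rw [hν]
    infer_instance
  have hν0 : ν {x : Fin n → ℝ | MvPolynomial.eval x P = 0} = 0 := by
    rw [ν.isAddLeftInvariant_eq_smul volume]
    simp [aux_poly_zero_locus n P hP0]
  have hpre : μ ((b.equivFun : symmetricMatrices p → (Fin n → ℝ)) ⁻¹'
      {x : Fin n → ℝ | MvPolynomial.eval x P = 0}) = 0 := by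
    rw [← hν0, hν, Measure.map_apply hconte.measurable hmeas_t]
  refine measure_mono_null ?_ hpre
  intro A hA
  simp only [Set.mem_setOf_eq] at hA
  simp only [Set.mem_preimage, Set.mem_setOf_eq]
  have h1 : (b.equivFun.symm (b.equivFun A) : symmetricMatrices p) = A :=
    b.equivFun.symm_apply_apply A
  rw [hevalP, h1]
  rw [aux_det_trace_pow (isHermitian_of_mem_symmetricMatrices A)]
  -- the vandermonde determinant vanishes
  obtain ⟨i, j, hij, hne⟩ := Function.not_injective_iff.mp hA
  have hvz : Matrix.det (Matrix.vandermonde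
      (isHermitian_of_mem_symmetricMatrices A).eigenvalues) = 0 := by
    rw [Matrix.det_vandermonde]
    rcases hne.lt_or_gt with h | h
    · refine Finset.prod_eq_zero (Finset.mem_univ i) ?_
      refine Finset.prod_eq_zero (Finset.mem_Ioi.mpr h) ?_
      rw [hij, sub_self]
    · refine Finset.prod_eq_zero (Finset.mem_univ j) ?_
      refine Finset.prod_eq_zero (Finset.mem_Ioi.mpr h) ?_
      rw [hij, sub_self]
  rw [hvz]
  norm_num
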